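/- Fix integers q ≥ 1, β > 0, J > 0 and a field h : Fin q → ℝ. For N ≥ 1 let Z_N := Σ_{σ : Fin N → Fin q} exp( (βJ/N)·Σ_{1≤i<j≤N} δ(σ_i, σ_j) + β·Σ_{s=0}^{q−1} h_s·N_s(σ) ), where δ is the Kronecker delta and N_s(σ) := #{i : σ_i = s}. Then lim_{N→∞} (1/N)·log Z_N = max { (βJ/2)·Σ_{s} m_s² + β·Σ_{s} h_s·m_s − Σ_{s} m_s·log m_s : m_s ≥ 0 for all s, Σ_{s} m_s = 1 }, with the convention 0·log 0 = 0. -/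

import Mathlib

open Real Filter Finset

noncomputable def pottsCount {N q : ℕ} (σ : Fin N → Fin q) (s : Fin q) : ℝ :=
  ((Finset.univ.filter fun i => σ i = s).card : ℝ)

namespace PottsAux
variable {N q : ℕ}

lemma count_eq (σ : Fin N → Fin q) (t : Fin q) :
    ∑ i : Fin N, (if σ i = t then (1:ℝ) else 0) = pottsCount σ t := by
  rw [pottsCount, Finset.sum_boole]

lemma count_nonneg (σ : Fin N → Fin q) (t : Fin q) : 0 ≤ pottsCount σ t :=
  Nat.cast_nonneg _

lemma sum_count (σ : Fin N → Fin q) : ∑ s : Fin q, pottsCount σ s = N := by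
  unfold pottsCount
  have := Finset.sum_fiberwise (Finset.univ : Finset (Fin N)) σ (fun _ => (1:ℝ))
  simpa using this

lemma comp_sum (σ : Fin N → Fin q) (g : Fin q → ℝ) :
    ∑ i : Fin N, g (σ i) = ∑ s : Fin q, pottsCount σ s * g s := by
  rw [← Finset.sum_fiberwise Finset.univ σ (fun i => g (σ i))]
  refine Finset.sum_congr rfl fun s _ => ?_
  rw [Finset.sum_congr rfl (fun i hi => by
    rw [(Finset.mem_filter.1 hi).2]), Finset.sum_const, pottsCount, nsmul_eq_mul]

lemma comp_prod (σ : Fin N → Fin q) (g : Fin q → ℝ) :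
    ∏ i : Fin N, g (σ i) = ∏ s : Fin q, g s ^ (Finset.univ.filter fun i => σ i = s).card := by
  rw [← Finset.prod_fiberwise Finset.univ σ (fun i => g (σ i))]
  refine Finset.prod_congr rfl fun s _ => ?_
  rw [Finset.prod_congr rfl (fun i hi => by
    rw [(Finset.mem_filter.1 hi).2]), Finset.prod_const]

lemma pair_sum (σ : Fin N → Fin q) :
    2 * (∑ p ∈ Finset.univ.filter (fun p : Fin N × Fin N => p.1 < p.2),
        (if σ p.1 = σ p.2 then (1:ℝ) else 0))
      = ∑ s : Fin q, (pottsCount σ s) ^ 2 - N := by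
  have key : ∑ p : Fin N × Fin N, (if σ p.1 = σ p.2 then (1:ℝ) else 0)
      = ∑ s : Fin q, (pottsCount σ s) ^ 2 := by
    rw [Fintype.sum_prod_type]
    have h1 : ∀ i : Fin N, ∑ j : Fin N, (if σ i = σ j then (1:ℝ) else 0) = pottsCount σ (σ i) := by
      intro i
      rw [← count_eq σ (σ i)]
      exact Finset.sum_congr rfl fun j _ => by simp [eq_comm]
    rw [Finset.sum_congr rfl fun i _ => h1 i, comp_sum σ (fun s => pottsCount σ s)]
    exact Finset.sum_congr rfl fun s _ => (sq _).symm
  -- split the full sum into <, >, =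
  set f : Fin N × Fin N → ℝ := fun p => if σ p.1 = σ p.2 then (1:ℝ) else 0 with hf
  have hsplit : ∑ p : Fin N × Fin N, f p
      = (∑ p ∈ Finset.univ.filter (fun p : Fin N × Fin N => p.1 < p.2), f p)
        + ((∑ p ∈ Finset.univ.filter (fun p : Fin N × Fin N => p.2 < p.1), f p)
          + (∑ p ∈ Finset.univ.filter (fun p : Fin N × Fin N => p.1 = p.2), f p)) := by
    rw [← Finset.sum_filter_add_sum_filter_not Finset.univ (fun p : Fin N × Fin N => p.1 < p.2) f]
    congr 1
    rw [← Finset.sum_filter_add_sum_filter_not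
      (Finset.univ.filter (fun p : Fin N × Fin N => ¬ p.1 < p.2))
      (fun p : Fin N × Fin N => p.2 < p.1) f]
    congr 1
    · apply Finset.sum_congr _ (fun _ _ => rfl)
      rw [Finset.filter_filter]
      ext p
      simp only [Finset.mem_filter, Finset.mem_univ, true_and]
      constructor
      · exact fun hp => hp.2
      · exact fun hp => ⟨not_lt_of_gt hp, hp⟩
    · apply Finset.sum_congr _ (fun _ _ => rfl)
      rw [Finset.filter_filter]
      ext p
      simp only [Finset.mem_filter, Finset.mem_univ, true_and]
      constructor
      · exact fun hp => le_antisymm (not_lt.1 hp.2) (not_lt.1 hp.1)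
      · exact fun hp => ⟨not_lt.2 hp.ge, not_lt.2 hp.le⟩
  have hswap : ∑ p ∈ Finset.univ.filter (fun p : Fin N × Fin N => p.2 < p.1), f p
      = ∑ p ∈ Finset.univ.filter (fun p : Fin N × Fin N => p.1 < p.2), f p := by
    apply Finset.sum_nbij' (fun p => Prod.swap p) (fun p => Prod.swap p)
    · intro p hp; simp only [Finset.mem_filter, Finset.mem_univ, true_and] at *; exact hp
    · intro p hp; simp only [Finset.mem_filter, Finset.mem_univ, true_and] at *; exact hp
    · intro p _; simp
    · intro p _; simp
    · intro p _; simp only [hf, Prod.fst_swap, Prod.snd_swap]; simp [eq_comm]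
  have hdiag : ∑ p ∈ Finset.univ.filter (fun p : Fin N × Fin N => p.1 = p.2), f p = N := by
    rw [Finset.sum_congr rfl (fun p hp => ?_), Finset.sum_const]
    · rw [nsmul_eq_mul, mul_one]
      congr 1
      have : (Finset.univ.filter (fun p : Fin N × Fin N => p.1 = p.2))
          = (Finset.univ : Finset (Fin N)).image (fun i => (i, i)) := by
        ext p
        simp only [Finset.mem_filter, Finset.mem_univ, true_and, Finset.mem_image]
        constructor
        · intro hp; exact ⟨p.1, by apply Prod.ext <;> simp [hp.symm]⟩
        · rintro ⟨i, _, rfl⟩; rfl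
      rw [this, Finset.card_image_of_injective _ (fun a b hab => (Prod.ext_iff.1 hab).1)]
      simp
    · have := (Finset.mem_filter.1 hp).2
      simp only [hf]
      rw [if_pos (by rw [this])]
  rw [hsplit, hswap, hdiag] at key
  linarith


lemma sum_prod (g : Fin N → Fin q → ℝ) :
    ∑ σ : Fin N → Fin q, ∏ i, g i (σ i) = ∏ i, ∑ s, g i s := by
  rw [Finset.prod_univ_sum, Fintype.piFinset_univ]

variable {m : Fin q → ℝ}

lemma measure_total (hm : ∑ s, m s = 1) :
    ∑ σ : Fin N → Fin q, ∏ i, m (σ i) = 1 := by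
  rw [sum_prod (fun _ s => m s)]
  simp [hm]

lemma marginal (hm : ∑ s, m s = 1) (i₀ : Fin N) (f : Fin q → ℝ) :
    ∑ σ : Fin N → Fin q, (∏ i, m (σ i)) * f (σ i₀) = ∑ s, m s * f s := by
  have hterm : ∀ σ : Fin N → Fin q, (∏ i, m (σ i)) * f (σ i₀)
      = ∏ i, (fun i s => if i = i₀ then m s * f s else m s) i (σ i) := by
    intro σ
    rw [← Finset.mul_prod_erase Finset.univ
      (fun i => (fun i s => if i = i₀ then m s * f s else m s) i (σ i)) (Finset.mem_univ i₀)]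
    simp only [if_pos rfl]
    rw [Finset.prod_congr rfl (fun i hi => if_neg (Finset.ne_of_mem_erase hi))]
    rw [← Finset.mul_prod_erase Finset.univ (fun i => m (σ i)) (Finset.mem_univ i₀)]
    simp only [if_pos]
    ring
  rw [Finset.sum_congr rfl (fun σ _ => hterm σ),
    sum_prod (g := fun i s => if i = i₀ then m s * f s else m s)]
  have hcol : ∀ i : Fin N, (∑ s, if i = i₀ then m s * f s else m s)
      = if i = i₀ then ∑ s, m s * f s else 1 := by
    intro i
    split <;> simp [hm]
  rw [Finset.prod_congr rfl (fun i _ => hcol i),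
    ← Finset.mul_prod_erase Finset.univ _ (Finset.mem_univ i₀)]
  simp only [if_pos rfl, if_true]
  rw [Finset.prod_congr rfl (fun i hi => if_neg (Finset.ne_of_mem_erase hi)),
    Finset.prod_const_one, mul_one]

lemma expected_count (hm : ∑ s, m s = 1) (t : Fin q) :
    ∑ σ : Fin N → Fin q, (∏ i, m (σ i)) * pottsCount σ t = N * m t := by
  have : ∀ σ : Fin N → Fin q, (∏ i, m (σ i)) * pottsCount σ t
      = ∑ i : Fin N, (∏ j, m (σ j)) * (if σ i = t then (1:ℝ) else 0) := by
    intro σ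
    rw [← Finset.mul_sum, count_eq]
  rw [Finset.sum_congr rfl (fun σ _ => this σ), Finset.sum_comm]
  have : ∀ i₀ : Fin N, ∑ σ : Fin N → Fin q, (∏ j, m (σ j)) * (if σ i₀ = t then (1:ℝ) else 0)
      = m t := by
    intro i₀
    rw [marginal hm i₀ (fun s => if s = t then (1:ℝ) else 0)]
    simp [mul_ite, Finset.sum_ite_eq']
  rw [Finset.sum_congr rfl (fun i _ => this i), Finset.sum_const, Finset.card_univ]
  simp [nsmul_eq_mul]

lemma expected_sq_count (hm : ∑ s, m s = 1) (hpos : ∀ s, 0 ≤ m s) (t : Fin q) :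
    (N * m t)^2 ≤ ∑ σ : Fin N → Fin q, (∏ i, m (σ i)) * (pottsCount σ t)^2 := by
  have hμ : ∀ σ : Fin N → Fin q, 0 ≤ ∏ i, m (σ i) :=
    fun σ => Finset.prod_nonneg fun i _ => hpos _
  have cs := Finset.sum_mul_sq_le_sq_mul_sq Finset.univ
    (fun σ : Fin N → Fin q => Real.sqrt (∏ i, m (σ i)))
    (fun σ : Fin N → Fin q => Real.sqrt (∏ i, m (σ i)) * pottsCount σ t)
  have e1 : ∀ σ : Fin N → Fin q,
      Real.sqrt (∏ i, m (σ i)) * (Real.sqrt (∏ i, m (σ i)) * pottsCount σ t)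
        = (∏ i, m (σ i)) * pottsCount σ t := by
    intro σ; rw [← mul_assoc, Real.mul_self_sqrt (hμ σ)]
  have e2 : ∀ σ : Fin N → Fin q, (Real.sqrt (∏ i, m (σ i)))^2 = ∏ i, m (σ i) :=
    fun σ => Real.sq_sqrt (hμ σ)
  have e3 : ∀ σ : Fin N → Fin q, (Real.sqrt (∏ i, m (σ i)) * pottsCount σ t)^2
      = (∏ i, m (σ i)) * (pottsCount σ t)^2 := by
    intro σ; rw [mul_pow, Real.sq_sqrt (hμ σ)]
  rw [Finset.sum_congr rfl (fun σ _ => e1 σ), Finset.sum_congr rfl (fun σ _ => e2 σ),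
    Finset.sum_congr rfl (fun σ _ => e3 σ), expected_count hm t, measure_total hm, one_mul] at cs
  exact cs

lemma entropy_eq (hm : ∑ s, m s = 1) (hpos : ∀ s, 0 < m s) :
    ∑ σ : Fin N → Fin q, (∏ i, m (σ i)) * Real.log (∏ i, m (σ i))
      = N * ∑ s, m s * Real.log (m s) := by
  have hlog : ∀ σ : Fin N → Fin q, Real.log (∏ i, m (σ i)) = ∑ i, Real.log (m (σ i)) :=
    fun σ => Real.log_prod fun i _ => (hpos _).ne'
  have : ∀ σ : Fin N → Fin q, (∏ i, m (σ i)) * Real.log (∏ i, m (σ i))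
      = ∑ i : Fin N, (∏ j, m (σ j)) * Real.log (m (σ i)) := by
    intro σ; rw [hlog, Finset.mul_sum]
  rw [Finset.sum_congr rfl (fun σ _ => this σ), Finset.sum_comm]
  rw [Finset.sum_congr rfl (fun i _ => marginal hm i (fun s => Real.log (m s))),
    Finset.sum_const, Finset.card_univ]
  simp [nsmul_eq_mul]

lemma jensen (hm : ∑ s, m s = 1) (hpos : ∀ s, 0 < m s) (E : (Fin N → Fin q) → ℝ) :
    ∑ σ : Fin N → Fin q, (∏ i, m (σ i)) * (E σ - Real.log (∏ i, m (σ i)))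
      ≤ Real.log (∑ σ : Fin N → Fin q, Real.exp (E σ)) := by
  set μ : (Fin N → Fin q) → ℝ := fun σ => ∏ i, m (σ i) with hμdef
  have hμpos : ∀ σ, 0 < μ σ := fun σ => Finset.prod_pos fun i _ => hpos _
  have key := (strictConcaveOn_log_Ioi.concaveOn).le_map_sum
    (t := Finset.univ) (w := μ) (p := fun σ => Real.exp (E σ) / μ σ)
    (fun σ _ => (hμpos σ).le) (measure_total hm)
    (fun σ _ => Set.mem_Ioi.2 (div_pos (Real.exp_pos _) (hμpos σ)))
  have e1 : ∑ σ : Fin N → Fin q, μ σ • (Real.exp (E σ) / μ σ)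
      = ∑ σ : Fin N → Fin q, Real.exp (E σ) := by
    refine Finset.sum_congr rfl fun σ _ => ?_
    rw [smul_eq_mul, mul_div_cancel₀ _ (hμpos σ).ne']
  have e2 : ∀ σ : Fin N → Fin q, μ σ • Real.log (Real.exp (E σ) / μ σ)
      = μ σ * (E σ - Real.log (μ σ)) := by
    intro σ
    rw [smul_eq_mul, Real.log_div (Real.exp_ne_zero _) (hμpos σ).ne', Real.log_exp]
  rw [e1, Finset.sum_congr rfl (fun σ _ => e2 σ)] at key
  exact key


lemma count_pos_at (σ : Fin N → Fin q) (i : Fin N) : (1:ℝ) ≤ pottsCount σ (σ i) := by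
  unfold pottsCount
  have : i ∈ Finset.univ.filter (fun j => σ j = σ i) := Finset.mem_filter.2 ⟨Finset.mem_univ _, rfl⟩
  exact_mod_cast Finset.card_pos.2 ⟨i, this⟩

lemma comp_prod_pos (σ : Fin N → Fin q) (hN : 0 < N) :
    0 < ∏ i, pottsCount σ (σ i) / N :=
  Finset.prod_pos fun i _ => div_pos (lt_of_lt_of_le one_pos (count_pos_at σ i))
    (by exact_mod_cast hN)

lemma sum_cnt (σ : Fin N → Fin q) :
    ∑ s : Fin q, (Finset.univ.filter fun i => σ i = s).card = N := by
  have := sum_count σ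
  unfold pottsCount at this
  exact_mod_cast this

lemma type_sum_le (hN : 0 < N) :
    ∑ σ : Fin N → Fin q, ∏ i, pottsCount σ (σ i) / N ≤ ((N:ℝ)+1)^q := by
  classical
  set G : (Fin N → Fin q) → ℝ := fun σ => ∏ i, pottsCount σ (σ i) / N with hG
  have Gnn : ∀ σ, 0 ≤ G σ :=
    fun σ => Finset.prod_nonneg fun i _ => div_nonneg (count_nonneg σ _) (Nat.cast_nonneg _)
  set T : (Fin N → Fin q) → (Fin q → Fin (N+1)) :=
    fun σ s => ⟨(Finset.univ.filter fun i => σ i = s).card,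
      Nat.lt_succ_of_le (le_trans (Finset.card_filter_le _ _) (by simp))⟩ with hT
  rw [← Finset.sum_fiberwise Finset.univ T G]
  have fiber_le : ∀ n : Fin q → Fin (N+1),
      ∑ σ ∈ Finset.univ.filter (fun σ => T σ = n), G σ ≤ 1 := by
    intro n
    rcases (Finset.univ.filter (fun σ => T σ = n)).eq_empty_or_nonempty with he | ⟨σ₀, hσ₀⟩
    · simp [he]
    · have hcnt : ∀ σ ∈ Finset.univ.filter (fun σ => T σ = n),
          ∀ s, pottsCount σ s = pottsCount σ₀ s := by
        intro σ hσ s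
        have h1 : T σ = n := (Finset.mem_filter.1 hσ).2
        have h2 : T σ₀ = n := (Finset.mem_filter.1 hσ₀).2
        have : T σ s = T σ₀ s := by rw [h1, h2]
        unfold pottsCount
        exact_mod_cast congrArg Fin.val this
      have step1 : ∑ σ ∈ Finset.univ.filter (fun σ => T σ = n), G σ
          = ∑ σ ∈ Finset.univ.filter (fun σ => T σ = n), ∏ i, pottsCount σ₀ (σ i) / N := by
        refine Finset.sum_congr rfl fun σ hσ => ?_
        exact Finset.prod_congr rfl fun i _ => by rw [hcnt σ hσ (σ i)]
      have step2 : ∑ σ ∈ Finset.univ.filter (fun σ => T σ = n), (∏ i, pottsCount σ₀ (σ i) / N)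
          ≤ ∑ σ : Fin N → Fin q, ∏ i, pottsCount σ₀ (σ i) / N := by
        apply Finset.sum_le_sum_of_subset_of_nonneg (Finset.filter_subset _ _)
        intro σ _ _
        exact Finset.prod_nonneg fun i _ => div_nonneg (count_nonneg σ₀ _) (Nat.cast_nonneg _)
      have step3 : ∑ σ : Fin N → Fin q, ∏ i, pottsCount σ₀ (σ i) / N = 1 := by
        rw [sum_prod (g := fun _ s => pottsCount σ₀ s / N)]
        have : ∑ s, pottsCount σ₀ s / N = 1 := by
          rw [← Finset.sum_div, sum_count σ₀, div_self (by exact_mod_cast hN.ne')]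
        rw [Finset.prod_congr rfl fun i _ => this, Finset.prod_const_one]
      rw [step1]
      exact le_trans step2 (le_of_eq step3)
  refine le_trans (Finset.sum_le_sum fun n _ => fiber_le n) ?_
  rw [Finset.sum_const, Finset.card_univ, nsmul_eq_mul, mul_one]
  have : Fintype.card (Fin q → Fin (N+1)) = (N+1)^q := by simp
  rw [this]
  push_cast
  exact le_refl _

lemma pointwise_upper (hN : 0 < N) (β J : ℝ) (hβ : 0 < β) (hJ : 0 < J) (h : Fin q → ℝ)
    (σ : Fin N → Fin q) :
    (β * J / (N:ℝ)) * ∑ p ∈ Finset.univ.filter (fun p : Fin N × Fin N => p.1 < p.2),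
        (if σ p.1 = σ p.2 then (1:ℝ) else 0)
      + β * ∑ s, h s * pottsCount σ s
    ≤ (N:ℝ) * ((β * J / 2) * ∑ s, (pottsCount σ s / N)^2
        + β * ∑ s, h s * (pottsCount σ s / N)
        - ∑ s, (pottsCount σ s / N) * Real.log (pottsCount σ s / N))
      + Real.log (∏ i, pottsCount σ (σ i) / N) := by
  have hN0 : (N:ℝ) ≠ 0 := by exact_mod_cast hN.ne'
  set A := ∑ s, (pottsCount σ s)^2 with hA
  set B := ∑ s, h s * pottsCount σ s with hB
  have hS : ∑ p ∈ Finset.univ.filter (fun p : Fin N × Fin N => p.1 < p.2),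
      (if σ p.1 = σ p.2 then (1:ℝ) else 0) = (A - N) / 2 := by
    have := pair_sum σ; linarith
  have e1 : ∑ s, (pottsCount σ s / N)^2 = A / (N:ℝ)^2 := by
    rw [hA, Finset.sum_div]
    exact Finset.sum_congr rfl fun s _ => div_pow _ _ _
  have e2 : ∑ s, h s * (pottsCount σ s / N) = B / N := by
    rw [hB, Finset.sum_div]
    exact Finset.sum_congr rfl fun s _ => (mul_div_assoc _ _ _).symm
  have e3 : (N:ℝ) * ∑ s, (pottsCount σ s / N) * Real.log (pottsCount σ s / N)
      = ∑ s, pottsCount σ s * Real.log (pottsCount σ s / N) := by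
    rw [Finset.mul_sum]
    refine Finset.sum_congr rfl fun s _ => ?_
    field_simp
  have e4 : Real.log (∏ i, pottsCount σ (σ i) / N)
      = ∑ s, pottsCount σ s * Real.log (pottsCount σ s / N) := by
    rw [comp_prod σ (fun s => pottsCount σ s / N)]
    rw [Real.log_prod]
    · refine Finset.sum_congr rfl fun s _ => ?_
      rw [Real.log_pow]
      unfold pottsCount
      norm_num
    · intro s _
      rcases Nat.eq_zero_or_pos (Finset.univ.filter fun i => σ i = s).card with h0 | h0
      · rw [h0, pow_zero]; exact one_ne_zero
      · apply pow_ne_zero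
        apply div_ne_zero _ hN0
        unfold pottsCount
        exact_mod_cast h0.ne'
  rw [hS, e1, e2, mul_sub, mul_add, e3, e4]
  have key : (N:ℝ) * (β * J / 2 * (A / (N:ℝ)^2)) - β * J / 2 = β * J / (N:ℝ) * ((A - (N:ℝ))/2) := by
    field_simp
  have key2 : (N:ℝ) * (β * (B / N)) = β * B := by field_simp
  nlinarith [mul_pos hβ hJ]

lemma log_lower (hN : 0 < N) (β J : ℝ) (hβ : 0 < β) (hJ : 0 < J) (h : Fin q → ℝ)
    (m : Fin q → ℝ) (hpos : ∀ s, 0 < m s) (hm : ∑ s, m s = 1) :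
    (N:ℝ) * ((β * J / 2) * ∑ s, (m s)^2 + β * ∑ s, h s * m s - ∑ s, m s * Real.log (m s))
      - β * J / 2
    ≤ Real.log (∑ σ : Fin N → Fin q, Real.exp
      ((β * J / (N:ℝ)) * ∑ p ∈ Finset.univ.filter (fun p : Fin N × Fin N => p.1 < p.2),
          (if σ p.1 = σ p.2 then (1:ℝ) else 0)
        + β * ∑ s, h s * pottsCount σ s)) := by
  have hN0 : (N:ℝ) ≠ 0 := by exact_mod_cast hN.ne'
  set E : (Fin N → Fin q) → ℝ := fun σ =>
    (β * J / (N:ℝ)) * ∑ p ∈ Finset.univ.filter (fun p : Fin N × Fin N => p.1 < p.2),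
        (if σ p.1 = σ p.2 then (1:ℝ) else 0)
      + β * ∑ s, h s * pottsCount σ s with hE
  have hj := jensen (N := N) hm hpos E
  refine le_trans ?_ hj
  have hsplit : ∑ σ : Fin N → Fin q, (∏ i, m (σ i)) * (E σ - Real.log (∏ i, m (σ i)))
      = ∑ σ : Fin N → Fin q, (∏ i, m (σ i)) * E σ
        - (N:ℝ) * ∑ s, m s * Real.log (m s) := by
    rw [← entropy_eq hm hpos, ← Finset.sum_sub_distrib]
    exact Finset.sum_congr rfl fun σ _ => by ring
  rw [hsplit]
  have hEeq : ∀ σ : Fin N → Fin q, (∏ i, m (σ i)) * E σ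
      = β * J / (2*(N:ℝ)) * ((∏ i, m (σ i)) * ∑ s, (pottsCount σ s)^2)
        - β * J / 2 * (∏ i, m (σ i))
        + β * ((∏ i, m (σ i)) * ∑ s, h s * pottsCount σ s) := by
    intro σ
    have hps := pair_sum σ
    have hfix : (∑ p ∈ Finset.univ.filter (fun p : Fin N × Fin N => p.1 < p.2),
        (if σ p.1 = σ p.2 then (1:ℝ) else 0)) = ((∑ s, (pottsCount σ s)^2) - (N:ℝ)) / 2 := by
      linarith
    rw [hE]
    simp only
    rw [hfix]
    field_simp
  rw [Finset.sum_congr rfl fun σ _ => hEeq σ, Finset.sum_add_distrib, Finset.sum_sub_distrib,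
    ← Finset.mul_sum, ← Finset.mul_sum, ← Finset.mul_sum, measure_total hm, mul_one]
  have hS2 : ∑ σ : Fin N → Fin q, (∏ i, m (σ i)) * ∑ s, h s * pottsCount σ s
      = (N:ℝ) * ∑ s, h s * m s := by
    have e : ∀ σ : Fin N → Fin q, (∏ i, m (σ i)) * ∑ s, h s * pottsCount σ s
        = ∑ s, h s * ((∏ i, m (σ i)) * pottsCount σ s) := by
      intro σ; rw [Finset.mul_sum]; exact Finset.sum_congr rfl fun s _ => by ring
    rw [Finset.sum_congr rfl fun σ _ => e σ, Finset.sum_comm]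
    have e2 : ∀ s : Fin q, ∑ σ : Fin N → Fin q, h s * ((∏ i, m (σ i)) * pottsCount σ s)
        = h s * ((N:ℝ) * m s) := by
      intro s
      rw [← Finset.mul_sum, expected_count hm s]
    rw [Finset.sum_congr rfl fun s _ => e2 s, Finset.mul_sum]
    exact Finset.sum_congr rfl fun s _ => by ring
  have hS1 : (N:ℝ)^2 * ∑ s, (m s)^2
      ≤ ∑ σ : Fin N → Fin q, (∏ i, m (σ i)) * ∑ s, (pottsCount σ s)^2 := by
    have e : ∀ σ : Fin N → Fin q, (∏ i, m (σ i)) * ∑ s, (pottsCount σ s)^2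
        = ∑ s, (∏ i, m (σ i)) * (pottsCount σ s)^2 := fun σ => Finset.mul_sum _ _ _
    rw [Finset.sum_congr rfl fun σ _ => e σ, Finset.sum_comm]
    have e2 : (N:ℝ)^2 * ∑ s, (m s)^2 = ∑ s, ((N:ℝ) * m s)^2 := by
      rw [Finset.mul_sum]
      exact Finset.sum_congr rfl fun s _ => by ring
    rw [e2]
    exact Finset.sum_le_sum fun s _ => expected_sq_count hm (fun t => (hpos t).le) s
  rw [hS2]
  have key : β * J / (2*(N:ℝ)) * ((N:ℝ)^2 * ∑ s, (m s)^2)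
      = (N:ℝ) * (β * J / 2 * ∑ s, (m s)^2) := by
    field_simp
  have key2 : β * J / (2*(N:ℝ)) * ((N:ℝ)^2 * ∑ s, (m s)^2)
      ≤ β * J / (2*(N:ℝ)) * (∑ σ : Fin N → Fin q, (∏ i, m (σ i)) * ∑ s, (pottsCount σ s)^2) := by
    apply mul_le_mul_of_nonneg_left hS1
    have : (0:ℝ) < N := by exact_mod_cast hN
    positivity
  nlinarith

lemma log_upper (hN : 0 < N) (hq : 1 ≤ q) (β J : ℝ) (hβ : 0 < β) (hJ : 0 < J) (h : Fin q → ℝ)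
    (L : ℝ)
    (hL : ∀ σ : Fin N → Fin q, (β * J / 2) * ∑ s, (pottsCount σ s / N)^2
        + β * ∑ s, h s * (pottsCount σ s / N)
        - ∑ s, (pottsCount σ s / N) * Real.log (pottsCount σ s / N) ≤ L) :
    Real.log (∑ σ : Fin N → Fin q, Real.exp
      ((β * J / (N:ℝ)) * ∑ p ∈ Finset.univ.filter (fun p : Fin N × Fin N => p.1 < p.2),
          (if σ p.1 = σ p.2 then (1:ℝ) else 0)
        + β * ∑ s, h s * pottsCount σ s))
      ≤ (N:ℝ) * L + (q:ℝ) * Real.log ((N:ℝ)+1) := by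
  haveI : Nonempty (Fin q) := ⟨⟨0, hq⟩⟩
  set E : (Fin N → Fin q) → ℝ := fun σ =>
    (β * J / (N:ℝ)) * ∑ p ∈ Finset.univ.filter (fun p : Fin N × Fin N => p.1 < p.2),
        (if σ p.1 = σ p.2 then (1:ℝ) else 0)
      + β * ∑ s, h s * pottsCount σ s with hE
  have hpt : ∀ σ : Fin N → Fin q, Real.exp (E σ)
      ≤ Real.exp ((N:ℝ) * L) * ∏ i, pottsCount σ (σ i) / N := by
    intro σ
    have h1 := pointwise_upper hN β J hβ hJ h σ
    have h2 : (N:ℝ) * ((β * J / 2) * ∑ s, (pottsCount σ s / N)^2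
        + β * ∑ s, h s * (pottsCount σ s / N)
        - ∑ s, (pottsCount σ s / N) * Real.log (pottsCount σ s / N)) ≤ (N:ℝ) * L :=
      mul_le_mul_of_nonneg_left (hL σ) (Nat.cast_nonneg N)
    have h3 : E σ ≤ (N:ℝ) * L + Real.log (∏ i, pottsCount σ (σ i) / N) := by
      rw [hE]; simp only; linarith
    calc Real.exp (E σ) ≤ Real.exp ((N:ℝ) * L + Real.log (∏ i, pottsCount σ (σ i) / N)) :=
          Real.exp_le_exp.2 h3
      _ = Real.exp ((N:ℝ) * L) * ∏ i, pottsCount σ (σ i) / N := by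
          rw [Real.exp_add, Real.exp_log (comp_prod_pos σ hN)]
  have hZpos : 0 < ∑ σ : Fin N → Fin q, Real.exp (E σ) :=
    Finset.sum_pos (fun σ _ => Real.exp_pos _) Finset.univ_nonempty
  have hZle : ∑ σ : Fin N → Fin q, Real.exp (E σ)
      ≤ Real.exp ((N:ℝ) * L) * ((N:ℝ)+1)^q := by
    calc ∑ σ : Fin N → Fin q, Real.exp (E σ)
        ≤ ∑ σ : Fin N → Fin q, Real.exp ((N:ℝ) * L) * ∏ i, pottsCount σ (σ i) / N :=
          Finset.sum_le_sum fun σ _ => hpt σ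
      _ = Real.exp ((N:ℝ) * L) * ∑ σ : Fin N → Fin q, ∏ i, pottsCount σ (σ i) / N :=
          (Finset.mul_sum _ _ _).symm
      _ ≤ Real.exp ((N:ℝ) * L) * ((N:ℝ)+1)^q :=
          mul_le_mul_of_nonneg_left (type_sum_le hN) (Real.exp_pos _).le
  calc Real.log (∑ σ : Fin N → Fin q, Real.exp (E σ))
      ≤ Real.log (Real.exp ((N:ℝ) * L) * ((N:ℝ)+1)^q) := Real.log_le_log hZpos hZle
    _ = (N:ℝ) * L + (q:ℝ) * Real.log ((N:ℝ)+1) := by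
        rw [Real.log_mul (Real.exp_ne_zero _) (by positivity), Real.log_exp, Real.log_pow]

end PottsAux

noncomputable def Fpotts (q : ℕ) (β J : ℝ) (h : Fin q → ℝ) (m : Fin q → ℝ) : ℝ :=
  (β * J / 2) * ∑ s, (m s)^2 + β * ∑ s, h s * m s - ∑ s, m s * Real.log (m s)

lemma neg_mul_log_le_one {x : ℝ} (hx : 0 ≤ x) : -(x * Real.log x) ≤ 1 := by
  rcases eq_or_lt_of_le hx with h0 | h0
  · simp [← h0]
  · have hinv := Real.log_le_sub_one_of_pos (inv_pos.2 h0)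
    rw [Real.log_inv] at hinv
    have hx1 : x * x⁻¹ = 1 := mul_inv_cancel₀ h0.ne'
    nlinarith

lemma bddF (q : ℕ) (β J : ℝ) (hβ : 0 < β) (hJ : 0 < J) (h : Fin q → ℝ) :
    BddAbove (Set.range fun m : {m : Fin q → ℝ // (∀ s, 0 ≤ m s) ∧ ∑ s, m s = 1} =>
      Fpotts q β J h m.1) := by
  refine ⟨β * J / 2 + β * ∑ s, |h s| + q, ?_⟩
  rintro x ⟨m, rfl⟩
  obtain ⟨hpos, hsum⟩ := m.2
  have hle1 : ∀ s, m.1 s ≤ 1 := by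
    intro s
    calc m.1 s ≤ ∑ t, m.1 t := Finset.single_le_sum (fun t _ => hpos t) (Finset.mem_univ s)
      _ = 1 := hsum
  have h1 : ∑ s, (m.1 s)^2 ≤ 1 := by
    calc ∑ s, (m.1 s)^2 ≤ ∑ s, m.1 s :=
          Finset.sum_le_sum fun s _ => by nlinarith [hpos s, hle1 s]
      _ = 1 := hsum
  have h2 : ∑ s, h s * m.1 s ≤ ∑ s, |h s| := by
    refine Finset.sum_le_sum fun s _ => ?_
    calc h s * m.1 s ≤ |h s| * m.1 s := mul_le_mul_of_nonneg_right (le_abs_self _) (hpos s)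
      _ ≤ |h s| * 1 := mul_le_mul_of_nonneg_left (hle1 s) (abs_nonneg _)
      _ = |h s| := mul_one _
  have h3 : -∑ s, m.1 s * Real.log (m.1 s) ≤ q := by
    rw [← Finset.sum_neg_distrib]
    calc ∑ s, -(m.1 s * Real.log (m.1 s)) ≤ ∑ _s : Fin q, (1:ℝ) :=
          Finset.sum_le_sum fun s _ => neg_mul_log_le_one (hpos s)
      _ = q := by simp
  have hb1 : (β * J / 2) * ∑ s, (m.1 s)^2 ≤ β * J / 2 := by
    have := mul_nonneg (show (0:ℝ) ≤ β * J / 2 by positivity)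
      (show (0:ℝ) ≤ 1 - ∑ s, (m.1 s)^2 by linarith)
    nlinarith
  have hb2 : β * ∑ s, h s * m.1 s ≤ β * ∑ s, |h s| :=
    mul_le_mul_of_nonneg_left h2 hβ.le
  unfold Fpotts
  linarith

lemma simplex_nonempty (q : ℕ) (hq : 1 ≤ q) :
    Nonempty {m : Fin q → ℝ // (∀ s, 0 ≤ m s) ∧ ∑ s, m s = 1} := by
  refine ⟨⟨fun _ => (q:ℝ)⁻¹, fun s => by positivity, ?_⟩⟩
  rw [Finset.sum_const, Finset.card_univ, Fintype.card_fin, nsmul_eq_mul]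
  field_simp

lemma exists_pos_approx (q : ℕ) (hq : 1 ≤ q) (β J : ℝ) (hβ : 0 < β) (hJ : 0 < J)
    (h : Fin q → ℝ) {b : ℝ}
    (hb : b < ⨆ m : {m : Fin q → ℝ // (∀ s, 0 ≤ m s) ∧ ∑ s, m s = 1}, Fpotts q β J h m.1) :
    ∃ m : Fin q → ℝ, (∀ s, 0 < m s) ∧ (∑ s, m s = 1) ∧ b < Fpotts q β J h m := by
  haveI := simplex_nonempty q hq
  obtain ⟨m₀, hm₀⟩ := exists_lt_of_lt_ciSup hb
  obtain ⟨h0pos, h0sum⟩ := m₀.2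
  have hq0 : (q:ℝ) ≠ 0 := by positivity
  set c : ℝ → (Fin q → ℝ) := fun δ s => (1-δ) * m₀.1 s + δ / q with hc
  have hccont : ∀ s : Fin q, Continuous (fun δ : ℝ => (1-δ) * m₀.1 s + δ / (q:ℝ)) := by
    intro s; continuity
  have hφ : Continuous (fun δ : ℝ => Fpotts q β J h (c δ)) := by
    unfold Fpotts
    refine Continuous.sub (Continuous.add ?_ ?_) ?_
    · exact continuous_const.mul (continuous_finset_sum _ fun s _ => (hccont s).pow 2)
    · exact continuous_const.mul (continuous_finset_sum _ fun s _ => continuous_const.mul (hccont s))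
    · exact continuous_finset_sum _ fun s _ =>
        (Real.continuous_mul_log).comp (hccont s)
  have hc0 : c 0 = m₀.1 := by
    funext s; simp [hc]
  have hev : ∀ᶠ δ in nhds (0:ℝ), b < Fpotts q β J h (c δ) := by
    refine (hφ.tendsto 0).eventually ?_
    rw [hc0]
    exact eventually_gt_nhds hm₀
  obtain ⟨r, hr, hball⟩ := Metric.eventually_nhds_iff.1 hev
  set δ : ℝ := min (r/2) (1/2) with hδ
  have hδpos : 0 < δ := lt_min (by linarith) (by norm_num)
  have hδlt : δ < 1 := lt_of_le_of_lt (min_le_right _ _) (by norm_num)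
  have hδr : dist δ 0 < r := by
    rw [Real.dist_eq, sub_zero, abs_of_pos hδpos]
    exact lt_of_le_of_lt (min_le_left _ _) (by linarith)
  refine ⟨c δ, ?_, ?_, hball hδr⟩
  · intro s
    have : 0 ≤ (1-δ) * m₀.1 s := mul_nonneg (by linarith) (h0pos s)
    have : 0 < δ / (q:ℝ) := by positivity
    simp only [hc]
    linarith
  · simp only [hc]
    rw [Finset.sum_add_distrib, ← Finset.mul_sum, h0sum, Finset.sum_const, Finset.card_univ,
      Fintype.card_fin, nsmul_eq_mul]
    field_simp
    ring


/-- Free energy density of the fully connected (mean-field) `q`-state Potts model in an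
external field `h`: `(1/N) log Z_N → max` over probability vectors `m` on the `q` states
of `(βJ/2)∑_s m_s² + β∑_s h_s m_s - ∑_s m_s log m_s` (convention `0·log 0 = 0`,
automatic since `Real.log 0 = 0`). -/
theorem potts_free_energy
    (q : ℕ) (hq : 1 ≤ q) (β J : ℝ) (hβ : 0 < β) (hJ : 0 < J) (h : Fin q → ℝ) :
    Tendsto
      (fun N : ℕ => (1 / (N : ℝ)) * Real.log
        (∑ σ : Fin N → Fin q, Real.exp
          ((β * J / (N : ℝ)) *
              ∑ p ∈ Finset.univ.filter (fun p : Fin N × Fin N => p.1 < p.2),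
                (if σ p.1 = σ p.2 then (1 : ℝ) else 0)
            + β * ∑ s : Fin q, h s * pottsCount σ s)))
      atTop
      (nhds (⨆ m : {m : Fin q → ℝ // (∀ s, 0 ≤ m s) ∧ ∑ s, m s = 1},
        ((β * J / 2) * ∑ s : Fin q, (m.1 s) ^ 2
          + β * ∑ s : Fin q, h s * m.1 s
          - ∑ s : Fin q, m.1 s * Real.log (m.1 s)))) := by
  classical
  haveI : Nonempty (Fin q) := ⟨⟨0, hq⟩⟩
  suffices H : Tendsto
      (fun N : ℕ => (1 / (N : ℝ)) * Real.log
        (∑ σ : Fin N → Fin q, Real.exp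
          ((β * J / (N : ℝ)) *
              ∑ p ∈ Finset.univ.filter (fun p : Fin N × Fin N => p.1 < p.2),
                (if σ p.1 = σ p.2 then (1 : ℝ) else 0)
            + β * ∑ s : Fin q, h s * pottsCount σ s)))
      atTop
      (nhds (⨆ m : {m : Fin q → ℝ // (∀ s, 0 ≤ m s) ∧ ∑ s, m s = 1}, Fpotts q β J h m.1)) by
    exact H
  set L : ℝ := ⨆ m : {m : Fin q → ℝ // (∀ s, 0 ≤ m s) ∧ ∑ s, m s = 1}, Fpotts q β J h m.1
    with hLdef
  have hbdd := bddF q β J hβ hJ h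
  rw [tendsto_order]
  constructor
  · -- lower bound side
    intro b hb
    obtain ⟨m, hmpos, hmsum, hmF⟩ := exists_pos_approx q hq β J hβ hJ h hb
    have t1 : Tendsto (fun N : ℕ => (β*J/2) / (N:ℝ)) atTop (nhds 0) :=
      tendsto_const_div_atTop_nhds_zero_nat _
    have hev1 := t1.eventually (gt_mem_nhds
      (show (0:ℝ) < Fpotts q β J h m - b by linarith))
    filter_upwards [hev1, eventually_ge_atTop 1] with N hN1 hN2
    have hNpos : 0 < N := hN2
    have hN0 : (0:ℝ) < N := by exact_mod_cast hNpos
    have hlow := PottsAux.log_lower hNpos β J hβ hJ h m hmpos hmsum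
    have key : ∀ x : ℝ,
        (N:ℝ) * ((β * J / 2) * ∑ s, (m s)^2 + β * ∑ s, h s * m s
          - ∑ s, m s * Real.log (m s)) - β * J / 2 ≤ x
        → b < (1/(N:ℝ)) * x := by
      intro x hx
      have h1 : (1/(N:ℝ)) * ((N:ℝ) * ((β * J / 2) * ∑ s, (m s)^2 + β * ∑ s, h s * m s
          - ∑ s, m s * Real.log (m s)) - β * J / 2) ≤ (1/(N:ℝ)) * x :=
        mul_le_mul_of_nonneg_left hx (by positivity)
      have h2 : (1/(N:ℝ)) * ((N:ℝ) * ((β * J / 2) * ∑ s, (m s)^2 + β * ∑ s, h s * m s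
          - ∑ s, m s * Real.log (m s)) - β * J / 2)
          = Fpotts q β J h m - (β*J/2)/(N:ℝ) := by
        unfold Fpotts
        field_simp
      rw [h2] at h1
      linarith
    exact key _ hlow
  · -- upper bound side
    intro b hb
    have hLle : ∀ (N : ℕ), 0 < N → ∀ σ : Fin N → Fin q,
        (β * J / 2) * ∑ s, (pottsCount σ s / (N:ℝ))^2
          + β * ∑ s, h s * (pottsCount σ s / (N:ℝ))
          - ∑ s, (pottsCount σ s / (N:ℝ)) * Real.log (pottsCount σ s / (N:ℝ)) ≤ L := by
      intro N hN σ
      have hN0 : (N:ℝ) ≠ 0 := by positivity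
      have hmem : (∀ s, 0 ≤ pottsCount σ s / (N:ℝ)) ∧ (∑ s, pottsCount σ s / (N:ℝ)) = 1 := by
        constructor
        · exact fun s => div_nonneg (PottsAux.count_nonneg σ s) (Nat.cast_nonneg _)
        · rw [← Finset.sum_div, PottsAux.sum_count σ, div_self hN0]
      exact le_ciSup hbdd (⟨fun s => pottsCount σ s / (N:ℝ), hmem⟩ :
        {m : Fin q → ℝ // (∀ s, 0 ≤ m s) ∧ ∑ s, m s = 1})
    have ta : Tendsto (fun x : ℝ => Real.log x / x) atTop (nhds 0) :=
      Real.isLittleO_log_id_atTop.tendsto_div_nhds_zero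
    have tb : Tendsto (fun N : ℕ => (N:ℝ)+1) atTop atTop :=
      Filter.tendsto_atTop_add_const_right atTop 1 tendsto_natCast_atTop_atTop
    have tc : Tendsto (fun N : ℕ => Real.log ((N:ℝ)+1)/((N:ℝ)+1)) atTop (nhds 0) := ta.comp tb
    have td : Tendsto (fun N : ℕ => ((N:ℝ)+1)/(N:ℝ)) atTop (nhds 1) := by
      have h0 : Tendsto (fun N : ℕ => 1 + (1:ℝ)/(N:ℝ)) atTop (nhds 1) := by
        have h1 := tendsto_const_div_atTop_nhds_zero_nat (1:ℝ)
        have h2 := (tendsto_const_nhds (x := (1:ℝ)) (f := atTop)).add h1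
        simpa using h2
      refine Tendsto.congr' ?_ h0
      filter_upwards [eventually_ge_atTop 1] with N hN
      have hN0 : (N:ℝ) ≠ 0 := by positivity
      field_simp
    have te : Tendsto (fun N : ℕ =>
        (q:ℝ) * ((Real.log ((N:ℝ)+1)/((N:ℝ)+1)) * (((N:ℝ)+1)/(N:ℝ)))) atTop (nhds 0) := by
      have := (tc.mul td).const_mul (q:ℝ)
      simpa using this
    have t2 : Tendsto (fun N : ℕ => (q:ℝ) * Real.log ((N:ℝ)+1) / (N:ℝ)) atTop (nhds 0) := by
      refine Tendsto.congr' ?_ te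
      filter_upwards [eventually_ge_atTop 1] with N hN
      have hN0 : (N:ℝ) ≠ 0 := by positivity
      have hN1 : (N:ℝ)+1 ≠ 0 := by positivity
      field_simp
    have hev2 := t2.eventually (gt_mem_nhds (show (0:ℝ) < b - L by linarith))
    filter_upwards [hev2, eventually_ge_atTop 1] with N hN1 hN2
    have hNpos : 0 < N := hN2
    have hN0 : (0:ℝ) < N := by exact_mod_cast hNpos
    have hup := PottsAux.log_upper hNpos hq β J hβ hJ h L (hLle N hNpos)
    have key : ∀ x : ℝ, x ≤ (N:ℝ) * L + (q:ℝ) * Real.log ((N:ℝ)+1)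
        → (1/(N:ℝ)) * x < b := by
      intro x hx
      have h1 : (1/(N:ℝ)) * x ≤ (1/(N:ℝ)) * ((N:ℝ) * L + (q:ℝ) * Real.log ((N:ℝ)+1)) :=
        mul_le_mul_of_nonneg_left hx (by positivity)
      have h2 : (1/(N:ℝ)) * ((N:ℝ) * L + (q:ℝ) * Real.log ((N:ℝ)+1))
          = L + (q:ℝ) * Real.log ((N:ℝ)+1) / (N:ℝ) := by
        field_simp
      rw [h2] at h1
      linarith
    exact key _ hup
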